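/- A mix-network pass preserves the multiset of plaintexts: for every commutative group G, element g ∈ G, natural sk, finite list of ciphertexts (c1_i, c2_i) ∈ G × G for i = 1, …, n, permutation π of {1, …, n}, and re-randomizers s_1, …, s_n ∈ ℕ, writing pk = g^sk, the multiset of decryptions under sk of the mixed ciphertexts ((c1_{π(i)} · g^{s_i}, c2_{π(i)} · pk^{s_i}))_{i=1}^n equals the multiset of decryptions under sk of the original ciphertexts ((c1_i, c2_i))_{i=1}^n. -/
import Mathlib

/-- A mix-network pass preserves the multiset of plaintexts: permuting a list of
ElGamal ciphertexts and re-encrypting each entry with fresh randomness leaves the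
multiset of decryptions unchanged. -/
theorem mixnet_preserves_plaintext_multiset {G : Type*} [CommGroup G]
    (g : G) (sk n : ℕ) (c : Fin n → G × G) (π : Equiv.Perm (Fin n)) (s : Fin n → ℕ) :
    (↑(List.ofFn fun i =>
        ((c (π i)).2 * (g ^ sk) ^ s i) * (((c (π i)).1 * g ^ s i) ^ sk)⁻¹) : Multiset G) =
      ↑(List.ofFn fun i => (c i).2 * ((c i).1 ^ sk)⁻¹) := by
  have h : (fun i =>
      ((c (π i)).2 * (g ^ sk) ^ s i) * (((c (π i)).1 * g ^ s i) ^ sk)⁻¹)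
      = (fun i => (c i).2 * ((c i).1 ^ sk)⁻¹) ∘ π := by
    funext i
    have hp : (g ^ sk) ^ s i = (g ^ s i) ^ sk := by
      rw [← pow_mul, ← pow_mul, Nat.mul_comm]
    simp only [Function.comp, hp, mul_pow, mul_inv]
    rw [mul_mul_mul_comm, mul_inv_cancel, mul_one]
  rw [h, Multiset.coe_eq_coe]
  exact π.ofFn_comp_perm _
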